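/- arXiv:math/0201209 — 6 statements merged into one kernel-verified Lean document; each statement's English description precedes it below -/
import Mathlib

section
/- For every real number s with 0 ≤ s ≤ 2, arcosh(1 + s²/2) ≤ (arcosh 3 / log 2) · log(1 + s/2), with equality at s = 0 and at s = 2. -/
noncomputable section

open Real hiding arcosh

/-- Inverse hyperbolic cosine: arcosh t = log (t + √(t² − 1)). -/
def arcosh (t : ℝ) : ℝ := Real.log (t + Real.sqrt (t ^ 2 - 1))

lemma arcosh_eq_two_arsinh {u : ℝ} (hu : 0 ≤ u) :
    arcosh (1 + 2 * u ^ 2) = 2 * Real.arsinh u := by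
  have hS : 0 ≤ Real.sqrt (1 + u ^ 2) := Real.sqrt_nonneg _
  have hS2 : Real.sqrt (1 + u ^ 2) ^ 2 = 1 + u ^ 2 :=
    Real.sq_sqrt (by positivity)
  have hsq : (1 + 2 * u ^ 2) ^ 2 - 1 = (2 * u * Real.sqrt (1 + u ^ 2)) ^ 2 := by
    nlinarith [hS2]
  have h1 : Real.sqrt ((1 + 2 * u ^ 2) ^ 2 - 1) = 2 * u * Real.sqrt (1 + u ^ 2) := by
    rw [hsq, Real.sqrt_sq (by positivity)]
  have hpos : 0 < u + Real.sqrt (1 + u ^ 2) := by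
    have : 1 ≤ Real.sqrt (1 + u ^ 2) := by nlinarith [hS2, hS]
    linarith
  have h2 : 1 + 2 * u ^ 2 + 2 * u * Real.sqrt (1 + u ^ 2)
      = (u + Real.sqrt (1 + u ^ 2)) ^ 2 := by nlinarith [hS2]
  rw [arcosh, h1, h2, Real.log_pow, Real.arsinh]
  push_cast
  ring

lemma log_two_pos' : (0:ℝ) < Real.log 2 := Real.log_pos (by norm_num)

lemma arsinh_one_gt : Real.log 2 < Real.arsinh 1 := by
  rw [Real.arsinh]
  have hs2 : Real.sqrt (1 + 1 ^ 2) ^ 2 = 1 + 1 ^ 2 := Real.sq_sqrt (by norm_num)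
  have h2 : (1:ℝ) < Real.sqrt (1 + 1 ^ 2) := by
    nlinarith [Real.sqrt_nonneg (1 + (1:ℝ) ^ 2)]
  exact Real.log_lt_log (by norm_num) (by linarith)

lemma arsinh_one_lt : 5 * Real.arsinh 1 < 7 * Real.log 2 := by
  have hs : Real.sqrt 2 ^ 2 = 2 := Real.sq_sqrt (by norm_num)
  have hs3 : Real.sqrt 2 < 3 := by
    nlinarith [Real.sqrt_nonneg 2]
  have h1 : Real.arsinh 1 = Real.log (1 + Real.sqrt 2) := by
    rw [Real.arsinh]; norm_num
  have h5 : 5 * Real.arsinh 1 = Real.log ((1 + Real.sqrt 2) ^ 5) := by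
    rw [h1, Real.log_pow]; push_cast; ring
  have h7 : 7 * Real.log 2 = Real.log (2 ^ 7) := by
    rw [Real.log_pow]; push_cast; ring
  have key : (1 + Real.sqrt 2) ^ 5 = 41 + 29 * Real.sqrt 2 := by
    linear_combination (Real.sqrt 2 ^ 3 + 5 * Real.sqrt 2 ^ 2 + 12 * Real.sqrt 2 + 20) * hs
  rw [h5, h7]
  apply Real.log_lt_log
  · positivity
  · rw [key]; norm_num; linarith

/-- Core inequality: arsinh u ≤ (arsinh 1 / log 2) * log (1+u) on [0,1]. -/
lemma arsinh_le_K_log {u : ℝ} (hu0 : 0 ≤ u) (hu1 : u ≤ 1) :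
    Real.arsinh u ≤ (Real.arsinh 1 / Real.log 2) * Real.log (1 + u) := by
  set K : ℝ := Real.arsinh 1 / Real.log 2 with hK
  have hL := log_two_pos'
  have hK1 : 1 < K := (one_lt_div hL).2 arsinh_one_gt
  have hK75 : K < 7 / 5 := by
    rw [hK, div_lt_iff₀ hL]
    linarith [arsinh_one_lt]
  have hK2 : K ^ 2 < 2 := by nlinarith
  -- the function h
  set h : ℝ → ℝ := fun x => K * Real.log (1 + x) - Real.arsinh x with hh
  -- derivative of h at any x ≥ 0
  have hderiv : ∀ x : ℝ, 0 ≤ x →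
      HasDerivAt h (K * (1 + x)⁻¹ - (Real.sqrt (1 + x ^ 2))⁻¹) x := by
    intro x hx
    have h1x : (1 + x) ≠ 0 := by linarith
    have hlog : HasDerivAt (fun y : ℝ => Real.log (1 + y)) ((1 + x)⁻¹) x := by
      have := (Real.hasDerivAt_log h1x).comp x ((hasDerivAt_id x).const_add 1)
      simpa [Function.comp_def] using this
    exact (hlog.const_mul K).sub (Real.hasDerivAt_arsinh x)
  -- the polynomial controlling the sign of h'
  set p : ℝ → ℝ := fun x => (K ^ 2 - 1) * x ^ 2 - 2 * x + (K ^ 2 - 1) with hp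
  have hp0 : 0 < p 0 := by
    show 0 < (K ^ 2 - 1) * (0:ℝ) ^ 2 - 2 * 0 + (K ^ 2 - 1); nlinarith
  have hp1 : p 1 < 0 := by
    show (K ^ 2 - 1) * (1:ℝ) ^ 2 - 2 * 1 + (K ^ 2 - 1) < 0; nlinarith
  have hpcont : ContinuousOn p (Set.Icc 0 1) := by
    apply Continuous.continuousOn; fun_prop
  obtain ⟨c, hcmem, hpc⟩ := intermediate_value_Icc' (by norm_num : (0:ℝ) ≤ 1) hpcont
    (Set.mem_Icc.2 ⟨hp1.le, hp0.le⟩)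
  obtain ⟨hc0, hc1⟩ := Set.mem_Icc.1 hcmem
  -- p is ≥ 0 on [0,c] and ≤ 0 on [c,1]
  have hpdec : ∀ x y : ℝ, 0 ≤ x → x ≤ y → y ≤ 1 → p y ≤ p x := by
    intro x y hx hxy hy
    show (K ^ 2 - 1) * y ^ 2 - 2 * y + (K ^ 2 - 1) ≤
      (K ^ 2 - 1) * x ^ 2 - 2 * x + (K ^ 2 - 1)
    have hfac : 0 ≤ (y - x) * (2 - (K ^ 2 - 1) * (x + y)) :=
      mul_nonneg (by linarith) (by nlinarith)
    nlinarith [hfac]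
  -- sign of h' from sign of p
  have hsign : ∀ x : ℝ, 0 ≤ x → x ≤ 1 → 0 ≤ p x →
      0 ≤ K * (1 + x)⁻¹ - (Real.sqrt (1 + x ^ 2))⁻¹ := by
    intro x hx hx1 hpx
    have hS : 0 < Real.sqrt (1 + x ^ 2) := Real.sqrt_pos.2 (by positivity)
    have hS2 : Real.sqrt (1 + x ^ 2) ^ 2 = 1 + x ^ 2 := Real.sq_sqrt (by positivity)
    have h1x : (0:ℝ) < 1 + x := by linarith
    have hineq : 1 + x ≤ K * Real.sqrt (1 + x ^ 2) := by
      have hsq : (1 + x) ^ 2 ≤ (K * Real.sqrt (1 + x ^ 2)) ^ 2 := by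
        simp only [hp] at hpx
        nlinarith
      nlinarith [mul_pos (by linarith : (0:ℝ) < K) hS]
    have h' : 1 / Real.sqrt (1 + x ^ 2) ≤ K / (1 + x) := by
      rw [div_le_div_iff₀ hS h1x]; linarith
    have : (Real.sqrt (1 + x ^ 2))⁻¹ ≤ K * (1 + x)⁻¹ := by
      simpa [one_div, div_eq_mul_inv] using h'
    linarith
  have hsign' : ∀ x : ℝ, 0 ≤ x → x ≤ 1 → p x ≤ 0 →
      K * (1 + x)⁻¹ - (Real.sqrt (1 + x ^ 2))⁻¹ ≤ 0 := by
    intro x hx hx1 hpx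
    have hS : 0 < Real.sqrt (1 + x ^ 2) := Real.sqrt_pos.2 (by positivity)
    have hS2 : Real.sqrt (1 + x ^ 2) ^ 2 = 1 + x ^ 2 := Real.sq_sqrt (by positivity)
    have h1x : (0:ℝ) < 1 + x := by linarith
    have hineq : K * Real.sqrt (1 + x ^ 2) ≤ 1 + x := by
      have hsq : (K * Real.sqrt (1 + x ^ 2)) ^ 2 ≤ (1 + x) ^ 2 := by
        simp only [hp] at hpx
        nlinarith
      nlinarith [mul_pos (by linarith : (0:ℝ) < K) hS]
    have h' : K / (1 + x) ≤ 1 / Real.sqrt (1 + x ^ 2) := by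
      rw [div_le_div_iff₀ h1x hS]; linarith
    have : K * (1 + x)⁻¹ ≤ (Real.sqrt (1 + x ^ 2))⁻¹ := by
      simpa [one_div, div_eq_mul_inv] using h'
    linarith
  -- h is monotone on [0,c], antitone on [c,1]
  have hcont : ContinuousOn h (Set.Icc 0 1) := fun x hx =>
    ((hderiv x hx.1).continuousAt).continuousWithinAt
  have hmono : MonotoneOn h (Set.Icc 0 c) := by
    apply monotoneOn_of_deriv_nonneg (convex_Icc 0 c)
      (hcont.mono (Set.Icc_subset_Icc le_rfl hc1))
    · intro x hx
      rw [interior_Icc] at hx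
      exact ((hderiv x hx.1.le).differentiableAt).differentiableWithinAt
    · intro x hx
      rw [interior_Icc] at hx
      rw [(hderiv x hx.1.le).deriv]
      refine hsign x hx.1.le (le_trans hx.2.le hc1) ?_
      calc (0:ℝ) = p c := hpc.symm
        _ ≤ p x := hpdec x c hx.1.le hx.2.le hc1
  have hanti : AntitoneOn h (Set.Icc c 1) := by
    apply antitoneOn_of_deriv_nonpos (convex_Icc c 1)
      (hcont.mono (Set.Icc_subset_Icc hc0 le_rfl))
    · intro x hx
      rw [interior_Icc] at hx
      exact ((hderiv x (le_trans hc0 hx.1.le)).differentiableAt).differentiableWithinAt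
    · intro x hx
      rw [interior_Icc] at hx
      rw [(hderiv x (le_trans hc0 hx.1.le)).deriv]
      refine hsign' x (le_trans hc0 hx.1.le) hx.2.le ?_
      calc p x ≤ p c := hpdec c x hc0 hx.1.le hx.2.le
        _ = 0 := hpc
  -- conclude h u ≥ 0
  have h0 : h 0 = 0 := by simp [hh]
  have h1 : h 1 = 0 := by
    simp only [hh, hK]
    have : (1:ℝ) + 1 = 2 := by norm_num
    rw [this]
    field_simp
    ring
  have hnonneg : 0 ≤ h u := by
    rcases le_or_gt u c with huc | huc
    · have := hmono (Set.mem_Icc.2 ⟨le_rfl, hc0⟩) (Set.mem_Icc.2 ⟨hu0, huc⟩) hu0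
      rw [h0] at this; exact this
    · have := hanti (Set.mem_Icc.2 ⟨huc.le, hu1⟩) (Set.mem_Icc.2 ⟨hc1, le_rfl⟩) hu1
      rw [h1] at this; exact this
  simpa [hh, sub_nonneg] using hnonneg

/-- For 0 ≤ s ≤ 2, arcosh(1 + s²/2) ≤ (arcosh 3 / log 2) · log(1 + s/2), with equality at
s = 0 and s = 2. -/
theorem arcosh_le_const_mul_log_half :
    (∀ s : ℝ, 0 ≤ s → s ≤ 2 →
      arcosh (1 + s ^ 2 / 2) ≤ (arcosh 3 / Real.log 2) * Real.log (1 + s / 2)) ∧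
    arcosh (1 + (0 : ℝ) ^ 2 / 2) = (arcosh 3 / Real.log 2) * Real.log (1 + (0 : ℝ) / 2) ∧
    arcosh (1 + (2 : ℝ) ^ 2 / 2) = (arcosh 3 / Real.log 2) * Real.log (1 + (2 : ℝ) / 2) := by
  have harc3 : arcosh 3 = 2 * Real.arsinh 1 := by
    have := arcosh_eq_two_arsinh (u := 1) (by norm_num)
    norm_num at this
    exact this
  have hL := log_two_pos'
  refine ⟨?_, ?_, ?_⟩
  · intro s hs0 hs2
    have hid : arcosh (1 + s ^ 2 / 2) = 2 * Real.arsinh (s / 2) := by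
      have := arcosh_eq_two_arsinh (u := s / 2) (by linarith)
      rw [← this]; ring_nf
    rw [hid, harc3]
    have := arsinh_le_K_log (u := s / 2) (by linarith) (by linarith)
    calc 2 * Real.arsinh (s / 2)
        ≤ 2 * ((Real.arsinh 1 / Real.log 2) * Real.log (1 + s / 2)) := by linarith
      _ = 2 * Real.arsinh 1 / Real.log 2 * Real.log (1 + s / 2) := by ring
  · simp [arcosh]
  · have : (1:ℝ) + (2:ℝ) ^ 2 / 2 = 3 := by norm_num
    rw [this]
    have : (1:ℝ) + (2:ℝ) / 2 = 2 := by norm_num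
    rw [this, div_mul_cancel₀]
    exact ne_of_gt hL

end
end

section
/- For every real number t ≥ 1, arcosh(1 + (t + 1/t)²/2) ≤ (arcosh 3 / log 2) · log(1 + (t² + 1)/(t + 1)), with equality at t = 1. -/
noncomputable section

set_option maxHeartbeats 1600000 in
private lemma core_ineq (t s w : ℝ) (ht : 1 ≤ t) (hs0 : 0 ≤ s) (hs14 : 7/5 ≤ s)
    (hs : s ^ 2 = 2) (hw0 : 0 ≤ w) (hw : w ^ 2 = t ^ 4 + 6 * t ^ 2 + 1) :
    2 * (t + 1) ^ 5 * (t ^ 2 + 1 + w) ^ 4 ≤ (17 + 12 * s) * t ^ 4 * (t ^ 2 + t + 2) ^ 5 := by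
  obtain ⟨x, hx, rfl⟩ : ∃ x : ℝ, 0 ≤ x ∧ t = 1 + x := ⟨t - 1, by linarith, by ring⟩
  have hp : ∀ n : ℕ, (0:ℝ) ≤ x ^ n := fun n => pow_nonneg hx n
  set q : ℝ := (1+x)^4 + 6*(1+x)^2 + 1 with hqdef
  set P : ℝ := ((1+x)^2+1)^4 + 6*((1+x)^2+1)^2*q + q^2 with hPdef
  set Qc : ℝ := 4*((1+x)^2+1)^3 + 4*((1+x)^2+1)*q with hQdef
  set A : ℝ := 17*(1+x)^4*((1+x)^2+(1+x)+2)^5 - 2*((1+x)+1)^5*P with hAdef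
  set B : ℝ := 12*(1+x)^4*((1+x)^2+(1+x)+2)^5 with hBdef
  set N : ℝ := 2*((1+x)+1)^5*Qc with hNdef
  have hexp : ((1+x)^2 + 1 + w)^4 = P + Qc * w := by
    rw [hPdef, hQdef, hqdef]
    linear_combination (6*((1+x)^2+1)^2 + 4*((1+x)^2+1)*w + w^2 + ((1+x)^4+6*(1+x)^2+1)) * hw
  have hApos : (0:ℝ) ≤ A := by
    have eA : A = 21760*x^1 + 138624*x^2 + 416992*x^3 + 784436*x^4 + 1030179*x^5 + 998081*x^6 + 734708*x^7 + 416692*x^8 + 182450*x^9 + 61078*x^10 + 15252*x^11 + 2704*x^12 + 307*x^13 + 17*x^14 := by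
      rw [hAdef, hPdef, hqdef]; ring
    rw [eA]
    linarith [hp 1, hp 2, hp 3, hp 4, hp 5, hp 6, hp 7, hp 8, hp 9, hp 10, hp 11, hp 12,
      hp 13, hp 14]
  have hBpos : (0:ℝ) ≤ B := by rw [hBdef]; positivity
  have hNpos : (0:ℝ) ≤ N := by rw [hNdef, hQdef, hqdef]; positivity
  have hABs : (0:ℝ) ≤ A + B * s := add_nonneg hApos (mul_nonneg hBpos hs0)
  have h5 : 5*(N^2*q) ≤ 5*A^2 + 14*(A*B) + 10*B^2 := by
    have eK : 5*A^2 + 14*(A*B) + 10*B^2 - 5*(N^2*q) = 7518289920*x^1 + 106156064768*x^2 + 724767277056*x^3 + 3188239466496*x^4 + 10157854697472*x^5 + 24976927618560*x^6 + 49312350051840*x^7 + 80288392835216*x^8 + 109861630521240*x^9 + 128091922029885*x^10 + 128556898918190*x^11 + 111894767473349*x^12 + 84914758964016*x^13 + 56385094426500*x^14 + 32826468052616*x^15 + 16764875621748*x^16 + 7504138115904*x^17 + 2936751034998*x^18 + 1000668957812*x^19 + 295029217846*x^20 + 74601857936*x^21 + 15980121556*x^22 + 2849854664*x^23 + 412699540*x^24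 + 46738024*x^25 + 3893237*x^26 + 212750*x^27 + 5741*x^28 := by
      simp only [hAdef, hBdef, hNdef, hPdef, hQdef, hqdef]; ring
    linarith [eK, hp 1, hp 2, hp 3, hp 4, hp 5, hp 6, hp 7, hp 8, hp 9, hp 10, hp 11, hp 12,
      hp 13, hp 14, hp 15, hp 16, hp 17, hp 18, hp 19, hp 20, hp 21, hp 22, hp 23, hp 24,
      hp 25, hp 26, hp 27, hp 28]
  have hw2 : N^2 * w^2 = N^2 * q := by rw [hw]
  have hs2 : B^2 * s^2 = 2 * B^2 := by rw [hs]; ring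
  have hABle : A*B*(7/5) ≤ A*B*s := mul_le_mul_of_nonneg_left hs14 (mul_nonneg hApos hBpos)
  have hkey : (N*w)^2 ≤ (A + B*s)^2 := by nlinarith [h5, hw2, hs2, hABle]
  have hNw : N*w ≤ A + B*s := le_of_pow_le_pow_left₀ (by norm_num) hABs hkey
  calc 2*((1+x)+1)^5*((1+x)^2+1+w)^4
      = 2*((1+x)+1)^5*P + N*w := by rw [hexp, hNdef]; ring
    _ ≤ 2*((1+x)+1)^5*P + (A + B*s) := by linarith
    _ = (17+12*s)*(1+x)^4*((1+x)^2+(1+x)+2)^5 := by rw [hAdef, hBdef]; ring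

set_option maxHeartbeats 1600000 in
/-- For t ≥ 1, arcosh(1 + (t + 1/t)²/2) ≤ (arcosh 3 / log 2) · log(1 + (t² + 1)/(t + 1)),
with equality at t = 1. -/
theorem arcosh_antipodal_le_const_mul_log :
    (∀ t : ℝ, 1 ≤ t →
      arcosh (1 + (t + 1 / t) ^ 2 / 2) ≤
        (arcosh 3 / Real.log 2) * Real.log (1 + (t ^ 2 + 1) / (t + 1))) ∧
    arcosh (1 + ((1 : ℝ) + 1 / 1) ^ 2 / 2) =
      (arcosh 3 / Real.log 2) * Real.log (1 + ((1 : ℝ) ^ 2 + 1) / (1 + 1)) := by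
  constructor
  · intro t ht
    have ht0 : (0:ℝ) < t := by linarith
    have htne : t ≠ 0 := ne_of_gt ht0
    set s : ℝ := Real.sqrt 2 with hsdef
    set w : ℝ := Real.sqrt (t^4 + 6*t^2 + 1) with hwdef
    have hs : s ^ 2 = 2 := Real.sq_sqrt (by norm_num)
    have hs0 : (0:ℝ) ≤ s := Real.sqrt_nonneg 2
    have hs14 : (7/5:ℝ) ≤ s := by nlinarith [hs, hs0]
    have hw : w ^ 2 = t^4 + 6*t^2 + 1 := Real.sq_sqrt (by positivity)
    have hw0 : (0:ℝ) ≤ w := Real.sqrt_nonneg _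
    have h4s : (1+s)^4 = 17 + 12*s := by linear_combination (s^2 + 4*s + 8) * hs
    have hac3 : arcosh 3 = 2 * Real.log (1+s) := by
      have e : (3:ℝ) + Real.sqrt ((3:ℝ)^2 - 1) = (1+s)^2 := by
        rw [show (3:ℝ)^2-1 = 2^2*2 by norm_num, Real.sqrt_mul (by norm_num) 2,
          Real.sqrt_sq (by norm_num : (0:ℝ) ≤ 2), ← hsdef]
        linear_combination -hs
      simp only [arcosh]
      rw [e, Real.log_pow]; norm_num
    have hlog2pos : (0:ℝ) < Real.log 2 := Real.log_pos one_lt_two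
    -- C ≥ 5/2
    have hCge : (5/2:ℝ) ≤ arcosh 3 / Real.log 2 := by
      rw [le_div_iff₀ hlog2pos]
      have h32 : Real.log 32 ≤ Real.log (17 + 12*s) := by
        apply Real.log_le_log (by norm_num)
        nlinarith [hs, hs0]
      have h325 : Real.log 32 = 5 * Real.log 2 := by
        rw [show (32:ℝ) = 2^5 by norm_num, Real.log_pow]; norm_num
      have h17 : Real.log (17 + 12*s) = 4 * Real.log (1+s) := by
        rw [← h4s, Real.log_pow]; norm_num
      rw [hac3]; linarith
    -- LHS in terms of Y = (t²+1+w)/(2t)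
    have hsqrtX : Real.sqrt ((1 + (t + 1/t)^2/2)^2 - 1) = (t^2+1)*w/(2*t^2) := by
      rw [show (1 + (t + 1/t)^2/2)^2 - 1 = ((t^2+1)*w/(2*t^2))^2 from by
        field_simp
        linear_combination (-(t^2+1)^2) * hw]
      exact Real.sqrt_sq (by positivity)
    have hL : arcosh (1 + (t + 1/t)^2/2) = 2 * Real.log ((t^2+1+w)/(2*t)) := by
      simp only [arcosh]
      rw [hsqrtX, show 1 + (t + 1/t)^2/2 + (t^2+1)*w/(2*t^2) = ((t^2+1+w)/(2*t))^2 from by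
        field_simp
        linear_combination (-1:ℝ) * hw]
      rw [Real.log_pow]; norm_num
    -- R/2
    have hR2pos : (0:ℝ) < (t^2+t+2)/(2*(t+1)) := by positivity
    have hR2ge1 : (1:ℝ) ≤ (t^2+t+2)/(2*(t+1)) := by
      rw [le_div_iff₀ (by linarith : (0:ℝ) < 2*(t+1))]
      nlinarith [mul_nonneg (by linarith : (0:ℝ) ≤ t) (by linarith : (0:ℝ) ≤ t - 1)]
    have hlogR2 : (0:ℝ) ≤ Real.log ((t^2+t+2)/(2*(t+1))) := Real.log_nonneg hR2ge1
    have hsplit : Real.log (1 + (t^2+1)/(t+1))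
        = Real.log 2 + Real.log ((t^2+t+2)/(2*(t+1))) := by
      rw [show 1 + (t^2+1)/(t+1) = 2 * ((t^2+t+2)/(2*(t+1))) from by field_simp; ring,
        Real.log_mul (by norm_num) (ne_of_gt hR2pos)]
    -- core
    have hcore := core_ineq t s w ht hs0 hs14 hs hw0 hw
    have hYpos : (0:ℝ) < (t^2+1+w)/(2*t) := by
      apply div_pos _ (by linarith)
      nlinarith [hw0, sq_nonneg t]
    have h24 : (0:ℝ) < (2*t)^4 := by positivity
    have h25 : (0:ℝ) < (2*(t+1))^5 := by positivity
    have hY4 : ((t^2+1+w)/(2*t))^4 ≤ (1+s)^4 * ((t^2+t+2)/(2*(t+1)))^5 := by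
      calc ((t^2+1+w)/(2*t))^4 = (t^2+1+w)^4/(2*t)^4 := by rw [div_pow]
        _ ≤ ((17+12*s)*(t^2+t+2)^5)/(2*(t+1))^5 := by
            rw [div_le_div_iff₀ h24 h25]; nlinarith [hcore]
        _ = (1+s)^4 * ((t^2+t+2)/(2*(t+1)))^5 := by rw [h4s, div_pow]; ring
    have hlog4 : Real.log (((t^2+1+w)/(2*t))^4)
        ≤ Real.log ((1+s)^4 * ((t^2+t+2)/(2*(t+1)))^5) :=
      Real.log_le_log (by positivity) hY4
    have e1 : Real.log (((t^2+1+w)/(2*t))^4) = 4 * Real.log ((t^2+1+w)/(2*t)) := by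
      rw [Real.log_pow]; norm_num
    have e2 : Real.log ((1+s)^4 * ((t^2+t+2)/(2*(t+1)))^5)
        = 4 * Real.log (1+s) + 5 * Real.log ((t^2+t+2)/(2*(t+1))) := by
      rw [Real.log_mul (by positivity) (ne_of_gt (pow_pos hR2pos 5)), Real.log_pow,
        Real.log_pow]
      norm_num
    have hC2 : arcosh 3 / Real.log 2 * Real.log 2 = arcosh 3 :=
      div_mul_cancel₀ _ (ne_of_gt hlog2pos)
    have h52 : (5/2:ℝ) * Real.log ((t^2+t+2)/(2*(t+1)))
        ≤ (arcosh 3 / Real.log 2) * Real.log ((t^2+t+2)/(2*(t+1))) :=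
      mul_le_mul_of_nonneg_right hCge hlogR2
    rw [hL, hsplit, mul_add, hC2]
    linarith [hlog4, e1, e2, hac3, h52]
  · have h2 : Real.log 2 ≠ 0 := ne_of_gt (Real.log_pos one_lt_two)
    norm_num [div_mul_cancel₀ _ h2]

end
end

section
/- Let 0 < q ≤ p < ∞ and let x, y ≥ 0 be real numbers. Then log(1 + (x^p + y^p)^{1/p}) ≤ log(1 + (x^q + y^q)^{1/q}) ≤ 2^{1/q − 1/p} · log(1 + (x^p + y^p)^{1/p}). -/
open scoped NNReal

lemma aux_rpow_add_rpow_le (p q x y : ℝ) (hq : 0 < q) (hqp : q ≤ p) (hx : 0 ≤ x) (hy : 0 ≤ y) :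
    (x ^ p + y ^ p) ^ (1 / p) ≤ (x ^ q + y ^ q) ^ (1 / q) := by
  have h := NNReal.rpow_add_rpow_le (Real.toNNReal x) (Real.toNNReal y) hq hqp
  have := NNReal.coe_le_coe.2 h
  simpa [NNReal.coe_rpow, Real.coe_toNNReal x hx, Real.coe_toNNReal y hy] using this

lemma aux_rpow_le_two_rpow (p q x y : ℝ) (hq : 0 < q) (hqp : q ≤ p) (hx : 0 ≤ x) (hy : 0 ≤ y) :
    (x ^ q + y ^ q) ^ (1 / q) ≤ (2 : ℝ) ^ (1 / q - 1 / p) * (x ^ p + y ^ p) ^ (1 / p) := by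
  have hp : 0 < p := lt_of_lt_of_le hq hqp
  set a := Real.toNNReal x
  set b := Real.toNNReal y
  have hr : (1 : ℝ) ≤ p / q := (one_le_div hq).2 hqp
  have h := NNReal.rpow_add_le_mul_rpow_add_rpow (a ^ q) (b ^ q) hr
  have hqa : (a ^ q) ^ (p / q) = a ^ p := by
    rw [← NNReal.rpow_mul, mul_div_cancel₀ _ hq.ne']
  have hqb : (b ^ q) ^ (p / q) = b ^ p := by
    rw [← NNReal.rpow_mul, mul_div_cancel₀ _ hq.ne']
  rw [hqa, hqb] at h
  have h2 : ((a ^ q + b ^ q) ^ (p / q)) ^ (1 / p) ≤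
      ((2 : ℝ≥0) ^ (p / q - 1) * (a ^ p + b ^ p)) ^ (1 / p) :=
    NNReal.rpow_le_rpow h (by positivity)
  rw [← NNReal.rpow_mul, NNReal.mul_rpow, ← NNReal.rpow_mul] at h2
  have e1 : p / q * (1 / p) = 1 / q := by field_simp
  have e2 : (p / q - 1) * (1 / p) = 1 / q - 1 / p := by field_simp
  rw [e1, e2] at h2
  have := NNReal.coe_le_coe.2 h2
  simpa [a, b, NNReal.coe_rpow, NNReal.coe_mul, Real.coe_toNNReal x hx, Real.coe_toNNReal y hy] using this

/-- For 0 < q ≤ p < ∞ and x, y ≥ 0: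
log(1 + (x^p + y^p)^(1/p)) ≤ log(1 + (x^q + y^q)^(1/q)) ≤ 2^(1/q − 1/p) · log(1 + (x^p + y^p)^(1/p)). -/
theorem log_powerMean_le (p q x y : ℝ) (hq : 0 < q) (hqp : q ≤ p) (hx : 0 ≤ x) (hy : 0 ≤ y) :
    Real.log (1 + (x ^ p + y ^ p) ^ (1 / p)) ≤ Real.log (1 + (x ^ q + y ^ q) ^ (1 / q)) ∧
    Real.log (1 + (x ^ q + y ^ q) ^ (1 / q)) ≤
      (2 : ℝ) ^ (1 / q - 1 / p) * Real.log (1 + (x ^ p + y ^ p) ^ (1 / p)) := by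
  have hp : 0 < p := lt_of_lt_of_le hq hqp
  set A := (x ^ p + y ^ p) ^ (1 / p) with hAdef
  set B := (x ^ q + y ^ q) ^ (1 / q) with hBdef
  have hA : 0 ≤ A := by positivity
  have hB : 0 ≤ B := by positivity
  have h1 : A ≤ B := aux_rpow_add_rpow_le p q x y hq hqp hx hy
  set c := (2 : ℝ) ^ (1 / q - 1 / p) with hcdef
  have hc : 1 ≤ c := by
    have h0 : (2 : ℝ) ^ (0 : ℝ) ≤ c := Real.rpow_le_rpow_of_exponent_le one_le_two
      (sub_nonneg.2 (one_div_le_one_div_of_le hq hqp))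
    simpa using h0
  have h2 : B ≤ c * A := aux_rpow_le_two_rpow p q x y hq hqp hx hy
  constructor
  · exact Real.log_le_log (by positivity) (by linarith)
  · calc Real.log (1 + B) ≤ Real.log (1 + c * A) :=
          Real.log_le_log (by positivity) (by linarith)
      _ ≤ Real.log ((1 + A) ^ c) :=
          Real.log_le_log (by nlinarith) (one_add_mul_self_le_rpow_one_add (by linarith) hc)
      _ = c * Real.log (1 + A) := Real.log_rpow (by positivity) c
end

section
/- Let p ≥ 1 and let s, t, u, v > 0 be real numbers with t^p + u^p ≤ s^p + v^p. Then 1 + ((s + t + st)^p + (u + v + uv)^p)^{1/p} ≤ (1 + (s^p + v^p)^{1/p})². -/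
open Real

lemma minkowski_two {p a b c d : ℝ} (hp : 1 ≤ p) (ha : 0 ≤ a) (hb : 0 ≤ b)
    (hc : 0 ≤ c) (hd : 0 ≤ d) :
    ((a + b) ^ p + (c + d) ^ p) ^ (1 / p) ≤
      (a ^ p + c ^ p) ^ (1 / p) + (b ^ p + d ^ p) ^ (1 / p) := by
  have := Real.Lp_add_le_of_nonneg (s := (Finset.univ : Finset (Fin 2)))
    (f := fun i => if i = 0 then a else c) (g := fun i => if i = 0 then b else d) hp
    (by intro i _; fin_cases i <;> simpa) (by intro i _; fin_cases i <;> simpa)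
  simpa [Fin.sum_univ_two] using this

/-- For p ≥ 1 and s, t, u, v > 0 with t^p + u^p ≤ s^p + v^p:
1 + ((s + t + st)^p + (u + v + uv)^p)^(1/p) ≤ (1 + (s^p + v^p)^(1/p))². -/
theorem central_inequality (p s t u v : ℝ) (hp : 1 ≤ p)
    (hs : 0 < s) (ht : 0 < t) (hu : 0 < u) (hv : 0 < v)
    (h : t ^ p + u ^ p ≤ s ^ p + v ^ p) :
    1 + ((s + t + s * t) ^ p + (u + v + u * v) ^ p) ^ (1 / p) ≤
      (1 + (s ^ p + v ^ p) ^ (1 / p)) ^ 2 := by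
  have hp0 : 0 < p := lt_of_lt_of_le one_pos hp
  have hp0' : p ≠ 0 := hp0.ne'
  have hip : 0 < 1 / p := by positivity
  set A := (s ^ p + v ^ p) ^ (1 / p) with hA
  have hA0 : 0 < A := by positivity
  -- t ≤ A and u ≤ A
  have htA : t ≤ A := by
    calc t = (t ^ p) ^ (1 / p) := by
          rw [one_div, Real.rpow_rpow_inv ht.le hp0']
      _ ≤ A := Real.rpow_le_rpow (by positivity)
          (le_trans (le_add_of_nonneg_right (by positivity)) h) hip.le
  have huA : u ≤ A := by
    calc u = (u ^ p) ^ (1 / p) := by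
          rw [one_div, Real.rpow_rpow_inv hu.le hp0']
      _ ≤ A := Real.rpow_le_rpow (by positivity)
          (le_trans (le_add_of_nonneg_left (by positivity)) h) hip.le
  have htuA : (t ^ p + u ^ p) ^ (1 / p) ≤ A :=
    Real.rpow_le_rpow (by positivity) h hip.le
  -- Minkowski decomposition
  have e1 : s + t + s * t = t + s * (1 + t) := by ring
  have e2 : u + v + u * v = u + v * (1 + u) := by ring
  have hmk := minkowski_two (p := p) hp ht.le (by positivity : (0:ℝ) ≤ s * (1 + t))
    hu.le (by positivity : (0:ℝ) ≤ v * (1 + u))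
  -- second term bound
  have hb : ((s * (1 + t)) ^ p + (v * (1 + u)) ^ p) ^ (1 / p) ≤ (1 + A) * A := by
    have h1 : (s * (1 + t)) ^ p ≤ ((1 + A) * s) ^ p :=
      Real.rpow_le_rpow (by positivity) (by nlinarith) hp0.le
    have h2 : (v * (1 + u)) ^ p ≤ ((1 + A) * v) ^ p :=
      Real.rpow_le_rpow (by positivity) (by nlinarith) hp0.le
    calc ((s * (1 + t)) ^ p + (v * (1 + u)) ^ p) ^ (1 / p)
        ≤ (((1 + A) * s) ^ p + ((1 + A) * v) ^ p) ^ (1 / p) :=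
          Real.rpow_le_rpow (by positivity) (add_le_add h1 h2) hip.le
      _ = ((1 + A) ^ p * (s ^ p + v ^ p)) ^ (1 / p) := by
          rw [Real.mul_rpow (by positivity) hs.le, Real.mul_rpow (by positivity) hv.le]
          ring
      _ = (1 + A) * A := by
          rw [Real.mul_rpow (by positivity) (by positivity), one_div,
            Real.rpow_rpow_inv (by positivity) hp0', hA, one_div]
  have key : ((s + t + s * t) ^ p + (u + v + u * v) ^ p) ^ (1 / p) ≤ A + (1 + A) * A := by
    rw [e1, e2]
    exact le_trans hmk (add_le_add htuA hb)
  nlinarith [key]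
end

section
/- Let p ≥ 1, α > 0, and let a, b be real numbers with 0 ≤ a ≤ α and 0 ≤ b ≤ α. Then (α^p − a^p)^{1/p} + (α^p − b^p)^{1/p} ≤ 2·(α^p − ((a + b)/2)^p)^{1/p}. -/
/-- Midpoint concavity of s ↦ (α^p − s^p)^(1/p) on [0, α] for p ≥ 1:
(α^p − a^p)^(1/p) + (α^p − b^p)^(1/p) ≤ 2·(α^p − ((a + b)/2)^p)^(1/p). -/
theorem midpoint_concavity (p α a b : ℝ) (hp : 1 ≤ p) (hα : 0 < α)
    (ha0 : 0 ≤ a) (haα : a ≤ α) (hb0 : 0 ≤ b) (hbα : b ≤ α) :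
    (α ^ p - a ^ p) ^ (1 / p) + (α ^ p - b ^ p) ^ (1 / p) ≤
      2 * (α ^ p - ((a + b) / 2) ^ p) ^ (1 / p) := by
  have hp0 : 0 < p := lt_of_lt_of_le one_pos hp
  set A := (α ^ p - a ^ p) ^ (1 / p) with hA
  set B := (α ^ p - b ^ p) ^ (1 / p) with hB
  have hWa : 0 ≤ α ^ p - a ^ p := sub_nonneg.2 (Real.rpow_le_rpow ha0 haα hp0.le)
  have hWb : 0 ≤ α ^ p - b ^ p := sub_nonneg.2 (Real.rpow_le_rpow hb0 hbα hp0.le)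
  have hA0 : 0 ≤ A := Real.rpow_nonneg hWa _
  have hB0 : 0 ≤ B := Real.rpow_nonneg hWb _
  have hAp : A ^ p = α ^ p - a ^ p := by
    rw [hA, one_div, Real.rpow_inv_rpow hWa hp0.ne']
  have hBp : B ^ p = α ^ p - b ^ p := by
    rw [hB, one_div, Real.rpow_inv_rpow hWb hp0.ne']
  -- Minkowski for vectors (a, A) and (b, B) in ℝ²
  have mink := Real.Lp_add_le (Finset.univ : Finset (Fin 2)) ![a, A] ![b, B] hp
  simp only [Fin.sum_univ_two, Matrix.cons_val_zero, Matrix.cons_val_one,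
    Matrix.head_cons] at mink
  rw [abs_of_nonneg ha0, abs_of_nonneg hb0, abs_of_nonneg hA0, abs_of_nonneg hB0,
    abs_of_nonneg (add_nonneg ha0 hb0), abs_of_nonneg (add_nonneg hA0 hB0),
    hAp, hBp] at mink
  have hsum : a ^ p + (α ^ p - a ^ p) = α ^ p := by ring
  have hsum' : b ^ p + (α ^ p - b ^ p) = α ^ p := by ring
  rw [hsum, hsum', one_div, Real.rpow_rpow_inv hα.le hp0.ne'] at mink
  -- mink : ((a+b)^p + (A+B)^p)^(p⁻¹) ≤ α + α
  have hX0 : 0 ≤ (a + b) ^ p + (A + B) ^ p :=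
    add_nonneg (Real.rpow_nonneg (add_nonneg ha0 hb0) _)
      (Real.rpow_nonneg (add_nonneg hA0 hB0) _)
  have key : (a + b) ^ p + (A + B) ^ p ≤ (2 * α) ^ p := by
    have := Real.rpow_le_rpow (Real.rpow_nonneg hX0 _) mink hp0.le
    rwa [Real.rpow_inv_rpow hX0 hp0.ne', show α + α = 2 * α by ring] at this
  have key2 : (A + B) ^ p ≤ (2 * α) ^ p - (a + b) ^ p := by linarith
  have hR0 : 0 ≤ (2 * α) ^ p - (a + b) ^ p :=
    le_trans (Real.rpow_nonneg (add_nonneg hA0 hB0) _) key2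
  have final : A + B ≤ ((2 * α) ^ p - (a + b) ^ p) ^ (1 / p) := by
    have := Real.rpow_le_rpow (Real.rpow_nonneg (add_nonneg hA0 hB0) p) key2
      (by positivity : (0:ℝ) ≤ 1 / p)
    rw [one_div, Real.rpow_rpow_inv (add_nonneg hA0 hB0) hp0.ne'] at this
    rw [one_div]
    exact this
  have heq : ((2 * α) ^ p - (a + b) ^ p) ^ (1 / p)
      = 2 * (α ^ p - ((a + b) / 2) ^ p) ^ (1 / p) := by
    have h2 : ((2:ℝ) ^ p) ^ (1 / p) = 2 := by
      rw [one_div, Real.rpow_rpow_inv (by norm_num) hp0.ne']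
    rw [Real.mul_rpow (by norm_num) hα.le,
      Real.div_rpow (add_nonneg ha0 hb0) (by norm_num : (0:ℝ) ≤ 2),
      show (2:ℝ) ^ p * α ^ p - (a + b) ^ p
        = 2 ^ p * (α ^ p - (a + b) ^ p / 2 ^ p) by
        field_simp,
      Real.mul_rpow (by positivity) (by
        rw [← Real.div_rpow (add_nonneg ha0 hb0) (by norm_num : (0:ℝ) ≤ 2)]
        exact sub_nonneg.2 (Real.rpow_le_rpow (by positivity)
          (by linarith : (a + b) / 2 ≤ α) hp0.le)), h2]
  rw [← heq]
  exact final
end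

section
/- Let G = ℝ̄ⁿ \ {0, ∞} (i.e. ℝⁿ \ {0} viewed as a domain in ℝ̄ⁿ, with boundary ∂G = {0, ∞}), and let e₁ be the first standard basis vector of ℝⁿ. Then ρ_G(e₁, −e₁) = arcosh 3 and δ_G(e₁, −e₁) = log 3; in particular ρ_G(e₁,−e₁) = (arcosh 3 / log 3) · δ_G(e₁,−e₁), so the constant arcosh 3 / log 3 in the inequality ρ_G ≤ (arcosh 3/log 3)·δ_G is sharp. -/
open OnePoint

noncomputable section

/-- Euclidean n-space. -/
abbrev En (n : ℕ) : Type := EuclideanSpace ℝ (Fin n)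

/-- The chordal (spherical) metric on the one-point compactification ℝ̄ⁿ of ℝⁿ. -/
def chordal {n : ℕ} : OnePoint (En n) → OnePoint (En n) → ℝ
  | ∞, ∞ => 0
  | ∞, (y : En n) => 1 / Real.sqrt (1 + ‖y‖ ^ 2)
  | (x : En n), ∞ => 1 / Real.sqrt (1 + ‖x‖ ^ 2)
  | (x : En n), (y : En n) => ‖x - y‖ / (Real.sqrt (1 + ‖x‖ ^ 2) * Real.sqrt (1 + ‖y‖ ^ 2))

/-- The cross-ratio |a,b,c,d| = q(a,c)q(b,d)/(q(a,b)q(c,d)) in the chordal metric. -/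
def crossRatio {n : ℕ} (a b c d : OnePoint (En n)) : ℝ :=
  chordal a c * chordal b d / (chordal a b * chordal c d)

/-- The generalized hyperbolic metric ρ_G(x,y) = sup_{a,b ∈ ∂G} arcosh(1 + |a,x,b,y||a,y,b,x|/2). -/
def rho {n : ℕ} (G : Set (OnePoint (En n))) (x y : OnePoint (En n)) : ℝ :=
  sSup {r : ℝ | ∃ a ∈ frontier G, ∃ b ∈ frontier G,
    r = arcosh (1 + crossRatio a x b y * crossRatio a y b x / 2)}

/-- Seittenranta's metric δ_G(x,y) = sup_{a,b ∈ ∂G} log(1 + |a,x,b,y|). -/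
def seittenranta {n : ℕ} (G : Set (OnePoint (En n))) (x y : OnePoint (En n)) : ℝ :=
  sSup {r : ℝ | ∃ a ∈ frontier G, ∃ b ∈ frontier G,
    r = Real.log (1 + crossRatio a x b y)}

/-- The j-metric j_G(x,y) = log(1 + |x−y|/min(d(x,∂G), d(y,∂G))). -/
def jMetric {n : ℕ} (G : Set (En n)) (x y : En n) : ℝ :=
  Real.log (1 + ‖x - y‖ / min (Metric.infDist x (frontier G)) (Metric.infDist y (frontier G)))

/-- The metric δ_G^p(x,y) = sup_{a,b ∈ ∂G} log(1 + (|x,a,y,b|^p + |x,b,y,a|^p)^(1/p)). -/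
def deltaP {n : ℕ} (p : ℝ) (G : Set (OnePoint (En n))) (x y : OnePoint (En n)) : ℝ :=
  sSup {r : ℝ | ∃ a ∈ frontier G, ∃ b ∈ frontier G,
    r = Real.log (1 + (crossRatio x a y b ^ p + crossRatio x b y a ^ p) ^ (1 / p))}

/-- The metric j_G^p(x,y) = sup_{a ∈ ∂G} log(1 + (|x−y|^p/|x−a|^p + |x−y|^p/|y−a|^p)^(1/p)). -/
def jP {n : ℕ} (p : ℝ) (G : Set (En n)) (x y : En n) : ℝ :=
  sSup {r : ℝ | ∃ a ∈ frontier G,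
    r = Real.log (1 + (‖x - y‖ ^ p / ‖x - a‖ ^ p + ‖x - y‖ ^ p / ‖y - a‖ ^ p) ^ (1 / p))}

/-- Sharpness of the constant arcosh 3 / log 3: for G = ℝ̄ⁿ \ {0, ∞} (so ∂G = {0, ∞}) and
e₁ the first standard basis vector, ρ_G(e₁, −e₁) = arcosh 3, δ_G(e₁, −e₁) = log 3, and
hence ρ_G(e₁, −e₁) = (arcosh 3 / log 3) · δ_G(e₁, −e₁). -/
theorem rho_seittenranta_sharp (n : ℕ) (hn : 2 ≤ n)
    (G : Set (OnePoint (En n)))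
    (hG : G = ({((0 : En n) : OnePoint (En n)), (∞ : OnePoint (En n))} : Set (OnePoint (En n)))ᶜ)
    (e₁ : En n) (he₁ : e₁ = EuclideanSpace.single (⟨0, by omega⟩ : Fin n) (1 : ℝ)) :
    rho G (e₁ : OnePoint (En n)) ((-e₁ : En n) : OnePoint (En n)) = arcosh 3 ∧
    seittenranta G (e₁ : OnePoint (En n)) ((-e₁ : En n) : OnePoint (En n)) = Real.log 3 ∧
    rho G (e₁ : OnePoint (En n)) ((-e₁ : En n) : OnePoint (En n)) =
      (arcosh 3 / Real.log 3) *
        seittenranta G (e₁ : OnePoint (En n)) ((-e₁ : En n) : OnePoint (En n)) := by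
  have he1 : ‖e₁‖ = 1 := by rw [he₁, EuclideanSpace.norm_single]; norm_num
  have hne1 : ‖-e₁‖ = 1 := by rw [norm_neg, he1]
  have hsub : ‖e₁ - -e₁‖ = 2 := by
    rw [sub_neg_eq_add, ← two_smul ℝ e₁, norm_smul, he1]; norm_num
  have hsub' : ‖-e₁ - e₁‖ = 2 := by
    rw [← norm_neg, neg_sub, sub_neg_eq_add, ← two_smul ℝ e₁, norm_smul, he1]; norm_num
  haveI : Nontrivial (En n) :=
    ⟨e₁, 0, by intro h; rw [h, norm_zero] at he1; norm_num at he1⟩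
  haveI : ∀ x : En n, Filter.NeBot (nhdsWithin x {x}ᶜ) :=
    fun x => Module.punctured_nhds_neBot ℝ _ x
  set z0 : OnePoint (En n) := ((0 : En n) : OnePoint (En n)) with hz0
  have hfr : frontier G = ({z0, ∞} : Set (OnePoint (En n))) := by
    rw [hG, frontier_compl]
    have hcl : IsClosed ({z0, ∞} : Set (OnePoint (En n))) := (Set.toFinite _).isClosed
    have hint : interior ({z0, ∞} : Set (OnePoint (En n))) = ∅ := by
      have h2 : ({z0, ∞} : Set (OnePoint (En n))) = {z0} ∪ {∞} := rfl
      rw [h2, interior_union_isClosed_of_interior_empty isClosed_singleton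
        (interior_singleton _), interior_singleton]
    rw [frontier, hcl.closure_eq, hint, Set.diff_empty]
  have h22 : Real.sqrt 2 * Real.sqrt 2 = 2 := Real.mul_self_sqrt (by norm_num)
  have s2pos : (0:ℝ) < Real.sqrt 2 := Real.sqrt_pos.2 (by norm_num)
  -- cross-ratio computations
  have hcr1 : ∀ u v : En n, ‖u‖ = 1 → ‖v‖ = 1 → ‖u - v‖ = 2 →
      crossRatio z0 (u : OnePoint (En n)) ∞ (v : OnePoint (En n)) = 2 := by
    intro u v hu hv huv
    show (1 / Real.sqrt (1 + ‖(0 : En n)‖ ^ 2)) *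
        (‖u - v‖ / (Real.sqrt (1 + ‖u‖ ^ 2) * Real.sqrt (1 + ‖v‖ ^ 2))) /
        ((‖(0 : En n) - u‖ / (Real.sqrt (1 + ‖(0 : En n)‖ ^ 2) * Real.sqrt (1 + ‖u‖ ^ 2))) *
          (1 / Real.sqrt (1 + ‖v‖ ^ 2))) = 2
    rw [zero_sub, norm_neg, hu, hv, huv, norm_zero]
    have e1 : Real.sqrt (1 + (0:ℝ) ^ 2) = 1 := by norm_num
    have e2 : Real.sqrt (1 + (1:ℝ) ^ 2) = Real.sqrt 2 := by norm_num
    rw [e1, e2]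
    field_simp
  have hcr2 : ∀ u v : En n, ‖u‖ = 1 → ‖v‖ = 1 → ‖u - v‖ = 2 →
      crossRatio ∞ (u : OnePoint (En n)) z0 (v : OnePoint (En n)) = 2 := by
    intro u v hu hv huv
    show (1 / Real.sqrt (1 + ‖(0 : En n)‖ ^ 2)) *
        (‖u - v‖ / (Real.sqrt (1 + ‖u‖ ^ 2) * Real.sqrt (1 + ‖v‖ ^ 2))) /
        ((1 / Real.sqrt (1 + ‖u‖ ^ 2)) *
          (‖(0 : En n) - v‖ / (Real.sqrt (1 + ‖(0 : En n)‖ ^ 2) * Real.sqrt (1 + ‖v‖ ^ 2)))) = 2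
    rw [zero_sub, norm_neg, hu, hv, huv, norm_zero]
    have e1 : Real.sqrt (1 + (0:ℝ) ^ 2) = 1 := by norm_num
    have e2 : Real.sqrt (1 + (1:ℝ) ^ 2) = Real.sqrt 2 := by norm_num
    rw [e1, e2]
    field_simp
  have hcr00 : ∀ u v : En n,
      crossRatio z0 (u : OnePoint (En n)) z0 (v : OnePoint (En n)) = 0 := by
    intro u v
    show (‖(0 : En n) - (0 : En n)‖ / _) * _ / _ = 0
    rw [sub_self, norm_zero, zero_div, zero_mul, zero_div]
  have hcrii : ∀ u v : En n,
      crossRatio ∞ (u : OnePoint (En n)) ∞ (v : OnePoint (En n)) = 0 := by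
    intro u v
    show (0 : ℝ) * _ / _ = 0
    rw [zero_mul, zero_div]
  have harcosh1 : arcosh 1 = 0 := by
    unfold arcosh; norm_num
  have harcosh3nonneg : 0 ≤ arcosh 3 := by
    unfold arcosh
    apply Real.log_nonneg
    nlinarith [Real.sqrt_nonneg ((3:ℝ) ^ 2 - 1)]
  have hlog3pos : (0:ℝ) < Real.log 3 := Real.log_pos (by norm_num)
  -- rho
  have hrho : rho G (e₁ : OnePoint (En n)) ((-e₁ : En n) : OnePoint (En n)) = arcosh 3 := by
    unfold rho
    have hset : {r : ℝ | ∃ a ∈ frontier G, ∃ b ∈ frontier G,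
        r = arcosh (1 + crossRatio a (e₁ : OnePoint (En n)) b ((-e₁ : En n) : OnePoint (En n)) *
          crossRatio a ((-e₁ : En n) : OnePoint (En n)) b (e₁ : OnePoint (En n)) / 2)} =
        ({arcosh 3, 0} : Set ℝ) := by
      rw [hfr]
      ext r
      simp only [Set.mem_setOf_eq, Set.mem_insert_iff, Set.mem_singleton_iff]
      constructor
      · rintro ⟨a, ha, b, hb, rfl⟩
        rcases ha with rfl | rfl <;> rcases hb with rfl | rfl
        · right
          rw [hcr00 e₁ (-e₁)]
          norm_num [harcosh1]
        · left
          rw [hcr1 e₁ (-e₁) he1 hne1 hsub, hcr1 (-e₁) e₁ hne1 he1 hsub']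
          norm_num
        · left
          rw [hcr2 e₁ (-e₁) he1 hne1 hsub, hcr2 (-e₁) e₁ hne1 he1 hsub']
          norm_num
        · right
          rw [hcrii e₁ (-e₁)]
          norm_num [harcosh1]
      · rintro (rfl | rfl)
        · refine ⟨z0, Or.inl rfl, ∞, Or.inr rfl, ?_⟩
          rw [hcr1 e₁ (-e₁) he1 hne1 hsub, hcr1 (-e₁) e₁ hne1 he1 hsub']
          norm_num
        · refine ⟨z0, Or.inl rfl, z0, Or.inl rfl, ?_⟩
          rw [hcr00 e₁ (-e₁)]
          norm_num [harcosh1]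
    rw [hset, csSup_pair]
    exact sup_eq_left.2 harcosh3nonneg
  -- seittenranta
  have hsei : seittenranta G (e₁ : OnePoint (En n)) ((-e₁ : En n) : OnePoint (En n)) =
      Real.log 3 := by
    unfold seittenranta
    have hset : {r : ℝ | ∃ a ∈ frontier G, ∃ b ∈ frontier G,
        r = Real.log (1 + crossRatio a (e₁ : OnePoint (En n)) b
          ((-e₁ : En n) : OnePoint (En n)))} = ({Real.log 3, 0} : Set ℝ) := by
      rw [hfr]
      ext r
      simp only [Set.mem_setOf_eq, Set.mem_insert_iff, Set.mem_singleton_iff]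
      constructor
      · rintro ⟨a, ha, b, hb, rfl⟩
        rcases ha with rfl | rfl <;> rcases hb with rfl | rfl
        · right; rw [hcr00 e₁ (-e₁)]; norm_num
        · left; rw [hcr1 e₁ (-e₁) he1 hne1 hsub]; norm_num
        · left; rw [hcr2 e₁ (-e₁) he1 hne1 hsub]; norm_num
        · right; rw [hcrii e₁ (-e₁)]; norm_num
      · rintro (rfl | rfl)
        · refine ⟨z0, Or.inl rfl, ∞, Or.inr rfl, ?_⟩
          rw [hcr1 e₁ (-e₁) he1 hne1 hsub]; norm_num
        · refine ⟨z0, Or.inl rfl, z0, Or.inl rfl, ?_⟩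
          rw [hcr00 e₁ (-e₁)]; norm_num
    rw [hset, csSup_pair]
    exact sup_eq_left.2 hlog3pos.le
  refine ⟨hrho, hsei, ?_⟩
  rw [hrho, hsei, div_mul_cancel₀ _ (ne_of_gt hlog3pos)]

end
end
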